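/- For every integer r ≥ 1, gluing the vertex v₁ of r copies of the edge-colored graph G_{4,1} (which has 5 vertices, 8 edges, and 4 colors and is 3-color connected) at a common vertex produces a 3-color connected edge-colored graph with 4r+1 vertices and 8r edges using 4 colors. -/

import Mathlib

/-- The edge list of the edge-colored graph G_{4,1} (vertices v₁,…,v₅ as 0,…,4, colors
c₁,…,c₄ as 0,…,3): color 0: (0,1),(2,3); color 1: (1,2),(0,4); color 2: (3,4),(0,2);
color 3: (1,4),(0,3). -/
def g41 : Fin 8 → (Fin 5 × Fin 5) × Fin 4 :=
  ![((0, 1), 0), ((2, 3), 0), ((1, 2), 1), ((0, 4), 1),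
    ((3, 4), 2), ((0, 2), 2), ((1, 4), 3), ((0, 3), 3)]

/-- Embedding of the vertices of the c-th copy of G_{4,1} into the glued vertex set
`Option (Fin r × Fin 4)`: vertex v₁ (= 0) is the shared vertex `none`, and vertex
v_{j+2} (= j+1) becomes `some (c, j)`. -/
def emb {r : ℕ} (c : Fin r) (v : Fin 5) : Option (Fin r × Fin 4) :=
  Fin.cases none (fun j => some (c, j)) v

def S (r : ℕ) (D : Finset (Fin 4)) (x y : Option (Fin r × Fin 4)) : Prop :=
  ∃ c : Fin r, ∃ e : Fin 8, (g41 e).2 ∉ D ∧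
    s(emb c (g41 e).1.1, emb c (g41 e).1.2) = s(x, y)

lemma Ssymm {r : ℕ} {D : Finset (Fin 4)} : Symmetric (S r D) := by
  rintro x y ⟨c, e, h, hs⟩
  exact ⟨c, e, h, hs.trans Sym2.eq_swap⟩

lemma estepF {r : ℕ} {D : Finset (Fin 4)} (c : Fin r) (e : Fin 8) (h : (g41 e).2 ∉ D)
    (x y : Option (Fin r × Fin 4)) (hx : emb c (g41 e).1.1 = x) (hy : emb c (g41 e).1.2 = y) :
    S r D x y := hx ▸ hy ▸ ⟨c, e, h, rfl⟩

lemma estepB {r : ℕ} {D : Finset (Fin 4)} (c : Fin r) (e : Fin 8) (h : (g41 e).2 ∉ D)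
    (x y : Option (Fin r × Fin 4)) (hx : emb c (g41 e).1.1 = x) (hy : emb c (g41 e).1.2 = y) :
    S r D y x := Ssymm (estepF c e h x y hx hy)

/- available colors 2,3 : edges e4=(3,4), e5=(0,2), e6=(1,4), e7=(0,3) -/
lemma p23 {r : ℕ} {D : Finset (Fin 4)} (h2 : (2:Fin 4) ∉ D) (h3 : (3:Fin 4) ∉ D)
    (c : Fin r) : ∀ v : Fin 5, Relation.ReflTransGen (S r D) none (emb c v) := by
  intro v; fin_cases v
  · exact .refl
  · exact .head (estepF c 7 h3 none (some (c,2)) rfl rfl)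
      (.head (estepF c 4 h2 (some (c,2)) (some (c,3)) rfl rfl)
        (.single (estepB c 6 h3 (some (c,0)) (some (c,3)) rfl rfl)))
  · exact .single (estepF c 5 h2 none (some (c,1)) rfl rfl)
  · exact .single (estepF c 7 h3 none (some (c,2)) rfl rfl)
  · exact .head (estepF c 7 h3 none (some (c,2)) rfl rfl)
      (.single (estepF c 4 h2 (some (c,2)) (some (c,3)) rfl rfl))

/- available colors 1,3 : edges e2=(1,2), e3=(0,4), e6=(1,4), e7=(0,3) -/
lemma p13 {r : ℕ} {D : Finset (Fin 4)} (h1 : (1:Fin 4) ∉ D) (h3 : (3:Fin 4) ∉ D)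
    (c : Fin r) : ∀ v : Fin 5, Relation.ReflTransGen (S r D) none (emb c v) := by
  intro v; fin_cases v
  · exact .refl
  · exact .head (estepF c 3 h1 none (some (c,3)) rfl rfl)
      (.single (estepB c 6 h3 (some (c,0)) (some (c,3)) rfl rfl))
  · exact .head (estepF c 3 h1 none (some (c,3)) rfl rfl)
      (.head (estepB c 6 h3 (some (c,0)) (some (c,3)) rfl rfl)
        (.single (estepF c 2 h1 (some (c,0)) (some (c,1)) rfl rfl)))
  · exact .single (estepF c 7 h3 none (some (c,2)) rfl rfl)
  · exact .single (estepF c 3 h1 none (some (c,3)) rfl rfl)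

/- available colors 1,2 : edges e2=(1,2), e3=(0,4), e4=(3,4), e5=(0,2) -/
lemma p12 {r : ℕ} {D : Finset (Fin 4)} (h1 : (1:Fin 4) ∉ D) (h2 : (2:Fin 4) ∉ D)
    (c : Fin r) : ∀ v : Fin 5, Relation.ReflTransGen (S r D) none (emb c v) := by
  intro v; fin_cases v
  · exact .refl
  · exact .head (estepF c 5 h2 none (some (c,1)) rfl rfl)
      (.single (estepB c 2 h1 (some (c,0)) (some (c,1)) rfl rfl))
  · exact .single (estepF c 5 h2 none (some (c,1)) rfl rfl)
  · exact .head (estepF c 3 h1 none (some (c,3)) rfl rfl)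
      (.single (estepB c 4 h2 (some (c,2)) (some (c,3)) rfl rfl))
  · exact .single (estepF c 3 h1 none (some (c,3)) rfl rfl)

/- available colors 0,3 : edges e0=(0,1), e1=(2,3), e6=(1,4), e7=(0,3) -/
lemma p03 {r : ℕ} {D : Finset (Fin 4)} (h0 : (0:Fin 4) ∉ D) (h3 : (3:Fin 4) ∉ D)
    (c : Fin r) : ∀ v : Fin 5, Relation.ReflTransGen (S r D) none (emb c v) := by
  intro v; fin_cases v
  · exact .refl
  · exact .single (estepF c 0 h0 none (some (c,0)) rfl rfl)
  · exact .head (estepF c 7 h3 none (some (c,2)) rfl rfl)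
      (.single (estepB c 1 h0 (some (c,1)) (some (c,2)) rfl rfl))
  · exact .single (estepF c 7 h3 none (some (c,2)) rfl rfl)
  · exact .head (estepF c 0 h0 none (some (c,0)) rfl rfl)
      (.single (estepF c 6 h3 (some (c,0)) (some (c,3)) rfl rfl))

/- available colors 0,2 : edges e0=(0,1), e1=(2,3), e4=(3,4), e5=(0,2) -/
lemma p02 {r : ℕ} {D : Finset (Fin 4)} (h0 : (0:Fin 4) ∉ D) (h2 : (2:Fin 4) ∉ D)
    (c : Fin r) : ∀ v : Fin 5, Relation.ReflTransGen (S r D) none (emb c v) := by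
  intro v; fin_cases v
  · exact .refl
  · exact .single (estepF c 0 h0 none (some (c,0)) rfl rfl)
  · exact .single (estepF c 5 h2 none (some (c,1)) rfl rfl)
  · exact .head (estepF c 5 h2 none (some (c,1)) rfl rfl)
      (.single (estepF c 1 h0 (some (c,1)) (some (c,2)) rfl rfl))
  · exact .head (estepF c 5 h2 none (some (c,1)) rfl rfl)
      (.head (estepF c 1 h0 (some (c,1)) (some (c,2)) rfl rfl)
        (.single (estepF c 4 h2 (some (c,2)) (some (c,3)) rfl rfl)))

/- available colors 0,1 : edges e0=(0,1), e1=(2,3), e2=(1,2), e3=(0,4) -/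
lemma p01 {r : ℕ} {D : Finset (Fin 4)} (h0 : (0:Fin 4) ∉ D) (h1 : (1:Fin 4) ∉ D)
    (c : Fin r) : ∀ v : Fin 5, Relation.ReflTransGen (S r D) none (emb c v) := by
  intro v; fin_cases v
  · exact .refl
  · exact .single (estepF c 0 h0 none (some (c,0)) rfl rfl)
  · exact .head (estepF c 0 h0 none (some (c,0)) rfl rfl)
      (.single (estepF c 2 h1 (some (c,0)) (some (c,1)) rfl rfl))
  · exact .head (estepF c 0 h0 none (some (c,0)) rfl rfl)
      (.head (estepF c 2 h1 (some (c,0)) (some (c,1)) rfl rfl)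
        (.single (estepF c 1 h0 (some (c,1)) (some (c,2)) rfl rfl)))
  · exact .single (estepF c 3 h1 none (some (c,3)) rfl rfl)

lemma reach_none {r : ℕ} (D : Finset (Fin 4)) (hD : D.card = 2)
    (x : Option (Fin r × Fin 4)) : Relation.ReflTransGen (S r D) none x := by
  have hc : 1 < Dᶜ.card := by
    rw [Finset.card_compl, hD]; decide
  obtain ⟨a, ha, b, hb, hab⟩ := Finset.one_lt_card.mp hc
  rw [Finset.mem_compl] at ha hb
  have reach : ∀ (c : Fin r) (v : Fin 5), Relation.ReflTransGen (S r D) none (emb c v) := by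
    fin_cases a <;> fin_cases b <;>
      first
        | exact absurd rfl hab
        | exact p01 ha hb | exact p01 hb ha
        | exact p02 ha hb | exact p02 hb ha
        | exact p03 ha hb | exact p03 hb ha
        | exact p12 ha hb | exact p12 hb ha
        | exact p13 ha hb | exact p13 hb ha
        | exact p23 ha hb | exact p23 hb ha
  cases x with
  | none => exact .refl
  | some p => exact reach p.1 p.2.succ

theorem stmt15 (r : ℕ) (hr : 1 ≤ r) :
    (∀ D : Finset (Fin 4), D.card = 2 →
      ∀ a b : Option (Fin r × Fin 4),
        Relation.ReflTransGen
          (fun x y => ∃ c : Fin r, ∃ e : Fin 8, (g41 e).2 ∉ D ∧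
            s(emb c (g41 e).1.1, emb c (g41 e).1.2) = s(x, y)) a b) ∧
    Nat.card (Option (Fin r × Fin 4)) = 4 * r + 1 ∧
    Nat.card (Fin r × Fin 8) = 8 * r := by
  refine ⟨?_, ?_, ?_⟩
  · intro D hD a b
    exact ((@Relation.ReflTransGen.stdSymm _ (S r D) ⟨Ssymm⟩).symm _ _ (reach_none D hD a)).trans
      (reach_none D hD b)
  · simp [Nat.card_eq_fintype_card, mul_comm]
  · simp [Nat.card_eq_fintype_card, mul_comm]
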